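/- For every nonzero k ∈ ℕ^I and every d ∈ ℤ, the ℚ(q)-vector space B_{k,d} = {R ∈ S_k : R homogeneous of total degree d and of slope ≤ d/|k|} is finite-dimensional. -/

import Mathlib

noncomputable section

namespace ADEShuffle

/-- The real-coefficients Euler form. -/
def eulerFormR {I A : Type} [Fintype I] [Fintype A] (s t : A → I) (v w : I → ℝ) : ℝ :=
  (∑ i, v i * w i) - ∑ a, v (s a) * w (t a)

/-- The field `ℚ(q)`. -/
abbrev Fq : Type := RatFunc ℚ

/-- The variable `q`. -/
def qvar : Fq := RatFunc.X

/-- The index set of the variables `z_{i,b}`, `i ∈ I`, `1 ≤ b ≤ k_i`. -/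
abbrev Vars (I : Type) (k : I → ℕ) : Type := Σ i : I, Fin (k i)

/-- Laurent polynomials over `ℚ(q)` in the variables `z_{i,b}` (numerators of shuffle
algebra elements `R = r / ∏_{arrows i→j} ∏_{b,c} (z_{i,b} - z_{j,c})`). -/
abbrev LaurentPoly (I : Type) (k : I → ℕ) : Type := AddMonoidAlgebra Fq ((Vars I k) →₀ ℤ)

/-- Evaluation of a Laurent polynomial at a point `z : Vars I k → ℚ(q)`. -/
def evalLaurent {I : Type} [Fintype I] {k : I → ℕ} (r : LaurentPoly I k)
    (z : Vars I k → Fq) : Fq :=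
  ∑ e ∈ r.coeff.support, r.coeff e * ∏ sv, z sv ^ (e sv)

/-- Two distinct vertices are adjacent if some arrow joins them (in either direction). -/
abbrev Adjacent {I A : Type} (s t : A → I) (i j : I) : Prop :=
  ∃ a, (s a = i ∧ t a = j) ∨ (s a = j ∧ t a = i)

/-- Color-symmetry of a Laurent polynomial (via evaluations at points with nonzero
coordinates, which determine the Laurent polynomial). -/
def ColorSym {I : Type} [Fintype I] {k : I → ℕ} (r : LaurentPoly I k) : Prop :=
  ∀ e : Vars I k ≃ Vars I k, (∀ sv : Vars I k, (e sv).1 = sv.1) →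
    ∀ z : Vars I k → Fq, (∀ sv, z sv ≠ 0) →
      evalLaurent r (z ∘ e) = evalLaurent r z

/-- The wheel conditions. -/
def WheelCond {I A : Type} [Fintype I] (s t : A → I) {k : I → ℕ}
    (r : LaurentPoly I k) : Prop :=
  ∀ i j, Adjacent s t i j → ∀ (hi : 2 ≤ k i) (hj : 1 ≤ k j),
    ∀ z : Vars I k → Fq, (∀ sv, z sv ≠ 0) →
      z ⟨i, ⟨0, by omega⟩⟩ = qvar * z ⟨j, ⟨0, by omega⟩⟩ →
      z ⟨i, ⟨1, by omega⟩⟩ = qvar⁻¹ * z ⟨j, ⟨0, by omega⟩⟩ →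
      evalLaurent r z = 0

/-- The `ξ`-weight of an exponent vector `e` under the substitution scaling the first
`l_i` variables of each color `i` by `ξ`: this is the `ξ`-exponent of the corresponding
monomial of the numerator after substitution. -/
def xiWeight {I : Type} [Fintype I] {k : I → ℕ} (l : I → ℕ) (e : Vars I k →₀ ℤ) : ℤ :=
  ∑ sv : Vars I k, if (sv.2 : ℕ) < l sv.1 then e sv else 0

/-- The `ξ`-degree of the denominator `∏_{arrows i→j} ∏_{b,c} (z_{i,b} - z_{j,c})`
after scaling the first `l_i` variables of each color by `ξ`: the number of factors
containing at least one scaled variable. -/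
def denomXiDeg {I A : Type} [Fintype A] (s t : A → I) (k l : I → ℕ) : ℤ :=
  ∑ a, ((k (s a) : ℤ) * (k (t a) : ℤ) -
    ((k (s a) : ℤ) - (l (s a) : ℤ)) * ((k (t a) : ℤ) - (l (t a) : ℤ)))

/-- `R = r / ∏` is homogeneous of total degree `d` iff every exponent vector in the
support of the numerator `r` has total degree `d + deg ∏ = d + Σ_a k_{s(a)} k_{t(a)}`. -/
def IsHomogOfDeg {I A : Type} [Fintype I] [Fintype A] (s t : A → I) {k : I → ℕ}
    (d : ℤ) (r : LaurentPoly I k) : Prop :=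
  ∀ e ∈ r.coeff.support, (∑ sv : Vars I k, e sv) = d + ∑ a, (k (s a) : ℤ) * (k (t a) : ℤ)

/-- `R = r / ∏` has slope `≤ μ`: for every `l ≤ k`, the degree in `ξ` of `R` with the
first `l_i` variables of each color scaled by `ξ` is at most `μ|l|`; the degree of the
substituted `R` equals `(max ξ-weight of the support of r) - denomXiDeg`. -/
def SlopeLE {I A : Type} [Fintype I] [Fintype A] (s t : A → I) {k : I → ℕ}
    (μ : ℚ) (r : LaurentPoly I k) : Prop :=
  ∀ l : I → ℕ, (∀ i, l i ≤ k i) → ∀ e ∈ r.coeff.support,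
    (xiWeight l e : ℚ) - (denomXiDeg s t k l : ℚ) ≤ μ * ∑ i, (l i : ℚ)

variable {I : Type} [Fintype I] {k : I → ℕ}

/-- Evaluation over any superset of the support. -/
lemma evalLaurent_eq_sum_subset (r : LaurentPoly I k) {S : Finset ((Vars I k) →₀ ℤ)}
    (hS : r.coeff.support ⊆ S) (z : Vars I k → Fq) :
    evalLaurent r z = ∑ e ∈ S, r.coeff e * ∏ sv, z sv ^ (e sv) := by
  refine Finset.sum_subset hS fun e _ he => ?_
  simp [Finsupp.notMem_support_iff.mp he]

/-- The character attached to an exponent vector. -/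
def chi (e : (Vars I k) →₀ ℤ) : (Vars I k → Fqˣ) →* Fq where
  toFun u := ∏ sv, ((u sv : Fq)) ^ (e sv)
  map_one' := by simp
  map_mul' u v := by
    simp only [Pi.mul_apply, Units.val_mul, mul_zpow, Finset.prod_mul_distrib]

lemma qvar_ne_zero : (qvar : Fq) ≠ 0 := RatFunc.X_ne_zero

lemma qvar_zpow_inj : Function.Injective (fun n : ℤ => (qvar : Fq) ^ n) := by
  let φ : Fqˣ →* Multiplicative ℤ := {
    toFun := fun u => Multiplicative.ofAdd (RatFunc.intDegree u.val)
    map_one' := by simp [RatFunc.intDegree_one]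
    map_mul' := fun u v => by
      simp [RatFunc.intDegree_mul u.ne_zero v.ne_zero, ofAdd_add] }
  intro n m h
  set qU : Fqˣ := Units.mk0 qvar qvar_ne_zero with hqU
  have hu : qU ^ n = qU ^ m := by
    apply Units.ext
    simpa [Units.val_zpow_eq_zpow_val, hqU] using h
  have h2 := congrArg φ hu
  simp only [map_zpow] at h2
  have hφq : φ qU = Multiplicative.ofAdd (1 : ℤ) := by
    simp [φ, hqU, qvar, RatFunc.intDegree_X]
  rw [hφq] at h2
  have := congrArg Multiplicative.toAdd h2
  simpa [toAdd_zpow] using this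

open Classical in
lemma chi_injective : Function.Injective (chi (I := I) (k := k)) := by
  intro e e' h
  ext sv₀
  have hu : chi e (fun sv => if sv = sv₀ then Units.mk0 qvar qvar_ne_zero else 1)
      = chi e' (fun sv => if sv = sv₀ then Units.mk0 qvar qvar_ne_zero else 1) := by rw [h]
  simp only [chi, MonoidHom.coe_mk, OneHom.coe_mk] at hu
  have key : ∀ (g : (Vars I k) →₀ ℤ),
      (∏ sv, (((if sv = sv₀ then Units.mk0 qvar qvar_ne_zero else 1 : Fqˣ) : Fq)) ^ (g sv))
        = qvar ^ (g sv₀) := by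
    intro g
    rw [Finset.prod_eq_single sv₀]
    · simp
    · intro sv _ hne; simp [hne]
    · simp
  rw [key e, key e'] at hu
  exact qvar_zpow_inj hu
set_option synthInstance.maxHeartbeats 1000000 in
lemma eq_zero_of_eval_eq_zero (r : LaurentPoly I k)
    (h : ∀ z : Vars I k → Fq, (∀ sv, z sv ≠ 0) → evalLaurent r z = 0) : r = 0 := by
  classical
  have li : LinearIndependent Fq
      (fun e : ↥(r.coeff.support : Finset ((Vars I k) →₀ ℤ)) =>
        ((chi e.1 : (Vars I k → Fqˣ) →* Fq) : (Vars I k → Fqˣ) → Fq)) := by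
    exact (linearIndependent_monoidHom (Vars I k → Fqˣ) Fq).comp
      (fun e : ↥r.coeff.support => chi e.1)
      (fun a b hab => Subtype.ext (chi_injective hab))
  have hsum : ∑ e : ↥r.coeff.support, r.coeff e.1 • ((chi e.1 : (Vars I k → Fqˣ) →* Fq) :
      (Vars I k → Fqˣ) → Fq) = 0 := by
    funext u
    have hz : ∀ sv, ((u sv : Fq)) ≠ 0 := fun sv => (u sv).ne_zero
    have := h (fun sv => (u sv : Fq)) hz
    simp only [evalLaurent] at this
    rw [← Finset.sum_attach r.coeff.support (fun e => r.coeff e * ∏ sv, ((u sv : Fq)) ^ (e sv))] at this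
    simpa [chi, Finset.sum_apply, Pi.smul_apply, smul_eq_mul] using this
  have hcoef := (Fintype.linearIndependent_iff.mp li) (fun e => r.coeff e.1) hsum
  ext e
  by_cases he : e ∈ r.coeff.support
  · exact hcoef ⟨e, he⟩
  · simpa using Finsupp.notMem_support_iff.mp he
lemma evalLaurent_sub (r r' : LaurentPoly I k) (z : Vars I k → Fq) :
    evalLaurent (r - r') z = evalLaurent r z - evalLaurent r' z := by
  classical
  set S := (r - r').coeff.support ∪ (r.coeff.support ∪ r'.coeff.support) with hS
  rw [evalLaurent_eq_sum_subset (r - r') (S := S) (by intro x hx; rw [hS]; exact Finset.mem_union_left _ hx) z,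
    evalLaurent_eq_sum_subset r (S := S) (by intro x hx; simp [hS, hx]) z,
    evalLaurent_eq_sum_subset r' (S := S) (by intro x hx; simp [hS, hx]) z,
    ← Finset.sum_sub_distrib]
  refine Finset.sum_congr rfl fun e _ => ?_
  rw [AddMonoidAlgebra.coeff_sub, Finsupp.sub_apply, sub_mul]

lemma support_equivMapDomain (σ : Vars I k ≃ Vars I k) (r : LaurentPoly I k) :
    (AddMonoidAlgebra.ofCoeff (Finsupp.equivMapDomain (Finsupp.equivCongrLeft σ) r.coeff) : LaurentPoly I k).coeff.support
      = r.coeff.support.map (Finsupp.equivCongrLeft σ).toEmbedding := by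
  ext e
  simp [Finsupp.mem_support_iff, Finset.mem_map_equiv]

lemma equivMapDomain_symm_comp (σ : Vars I k ≃ Vars I k) (e : (Vars I k) →₀ ℤ) :
    Finsupp.equivMapDomain σ.symm (Finsupp.equivMapDomain σ e) = e := by
  ext a; simp

lemma eval_equivMapDomain (σ : Vars I k ≃ Vars I k) (r : LaurentPoly I k)
    (z : Vars I k → Fq) :
    evalLaurent (AddMonoidAlgebra.ofCoeff (Finsupp.equivMapDomain (Finsupp.equivCongrLeft σ) r.coeff) : LaurentPoly I k) z
      = evalLaurent r (z ∘ σ) := by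
  classical
  unfold evalLaurent
  rw [support_equivMapDomain, Finset.sum_map]
  simp only [Equiv.coe_toEmbedding]
  refine Finset.sum_congr rfl fun e _ => ?_
  congr 1
  · simp [equivMapDomain_symm_comp]
  · simp only [Finsupp.equivCongrLeft_apply, Finsupp.equivMapDomain_apply]
    rw [← Equiv.prod_comp σ (fun sv => z sv ^ (e (σ.symm sv)))]
    simp

lemma support_perm_mem {r : LaurentPoly I k} (hr : ColorSym r)
    (σ : Vars I k ≃ Vars I k) (hσ : ∀ sv : Vars I k, (σ sv).1 = sv.1)
    {e : (Vars I k) →₀ ℤ} (he : e ∈ r.coeff.support) :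
    Finsupp.equivMapDomain σ e ∈ r.coeff.support := by
  classical
  set r' : LaurentPoly I k := AddMonoidAlgebra.ofCoeff (Finsupp.equivMapDomain (Finsupp.equivCongrLeft σ) r.coeff) with hr'
  have hrr : r' = r := by
    have h0 : ∀ z : Vars I k → Fq, (∀ sv, z sv ≠ 0) → evalLaurent (r' - r) z = 0 := by
      intro z hz
      rw [evalLaurent_sub, hr', eval_equivMapDomain σ r z, hr σ hσ z hz, sub_self]
    have h1 := eq_zero_of_eval_eq_zero (r' - r) h0
    have h2 : r' - r + r = 0 + r := by rw [h1]
    simpa using h2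
  have hmem : Finsupp.equivCongrLeft σ e ∈ r'.coeff.support := by
    rw [hr', support_equivMapDomain]
    exact Finset.mem_map_of_mem _ he
  rw [hrr] at hmem
  simpa [Finsupp.equivCongrLeft_apply] using hmem
variable [DecidableEq I]

/-- Swap of two variables of the same color. -/
def colorSwap (i : I) (b c : Fin (k i)) : Vars I k ≃ Vars I k :=
  Equiv.sigmaCongrRight fun j =>
    if h : i = j then Equiv.swap (h ▸ b) (h ▸ c) else Equiv.refl _

omit [Fintype I] in
lemma colorSwap_fst (i : I) (b c : Fin (k i)) (sv : Vars I k) :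
    ((colorSwap i b c) sv).1 = sv.1 := by
  cases sv; rfl

omit [Fintype I] in
lemma colorSwap_symm_apply (i : I) (b c : Fin (k i)) :
    (colorSwap i b c).symm ⟨i, c⟩ = (⟨i, b⟩ : Vars I k) := by
  simp [colorSwap, Equiv.swap_apply_right]

lemma xiWeight_single (i : I) (c : Fin (k i)) (hc : (c : ℕ) = 0) (e : (Vars I k) →₀ ℤ) :
    xiWeight (fun j => if j = i then 1 else 0) e = e ⟨i, c⟩ := by
  classical
  unfold xiWeight
  rw [Finset.sum_eq_single (⟨i, c⟩ : Vars I k)]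
  · dsimp only
    simp [hc]
  · rintro ⟨j, x⟩ - hne
    by_cases hj : j = i
    · subst hj
      have hx : (x : ℕ) ≠ 0 := by
        intro h0x
        exact hne (by rw [Fin.ext (h0x.trans hc.symm)])
      dsimp only
      simp [hx]
    · dsimp only
      simp [hj]
  · intro h; exact absurd (Finset.mem_univ _) h

set_option maxHeartbeats 1000000 in
lemma xiWeight_allButLast (i : I) (c : Fin (k i)) (hc : (c : ℕ) = k i - 1)
    (e : (Vars I k) →₀ ℤ) :
    xiWeight (fun j => if j = i then k i - 1 else k j) e
      = (∑ sv : Vars I k, e sv) - e ⟨i, c⟩ := by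
  classical
  unfold xiWeight
  have hsplit : ∀ sv : Vars I k,
      (if (sv.2 : ℕ) < (if sv.1 = i then k i - 1 else k sv.1) then e sv else 0)
        = e sv - (if (sv.2 : ℕ) < (if sv.1 = i then k i - 1 else k sv.1) then 0 else e sv) := by
    intro sv; by_cases h : (sv.2 : ℕ) < (if sv.1 = i then k i - 1 else k sv.1) <;> simp [h]
  rw [Finset.sum_congr rfl (fun sv _ => hsplit sv), Finset.sum_sub_distrib]
  congr 1
  rw [Finset.sum_eq_single (⟨i, c⟩ : Vars I k)]
  · dsimp only
    rw [if_pos rfl, if_neg (by omega)]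
  · rintro ⟨j, x⟩ - hne
    by_cases hj : j = i
    · subst hj
      have hx : (x : ℕ) ≠ k j - 1 := by
        intro h0x
        exact hne (by rw [Fin.ext (h0x.trans hc.symm)])
      have hlt := x.isLt
      dsimp only
      rw [if_pos rfl, if_pos (by omega)]
    · dsimp only
      rw [if_neg hj, if_pos x.isLt]
  · intro h; exact absurd (Finset.mem_univ _) h
lemma coord_bounds {A : Type} [Fintype A] (s t : A → I) (d : ℤ) (μ : ℚ)
    {r : LaurentPoly I k} (hsym : ColorSym r) (hhom : IsHomogOfDeg s t d r)
    (hslope : SlopeLE s t μ r) {e : (Vars I k) →₀ ℤ} (he : e ∈ r.coeff.support)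
    (i : I) (b : Fin (k i)) :
    ((e ⟨i, b⟩ : ℤ) : ℚ) ≤ μ * (∑ j, (((if j = i then 1 else 0 : ℕ)) : ℚ))
        + (denomXiDeg s t k (fun j => if j = i then 1 else 0) : ℚ)
    ∧ ((d + ∑ a, (k (s a) : ℤ) * (k (t a) : ℤ) : ℤ) : ℚ)
        - (μ * (∑ j, (((if j = i then k i - 1 else k j : ℕ)) : ℚ))
          + (denomXiDeg s t k (fun j => if j = i then k i - 1 else k j) : ℚ))
      ≤ ((e ⟨i, b⟩ : ℤ) : ℚ) := by
  have h0 : 0 < k i := b.pos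
  constructor
  · set c0 : Fin (k i) := ⟨0, h0⟩ with hc0
    set σ := colorSwap i b c0 with hσ
    have he' := support_perm_mem hsym σ (colorSwap_fst i b c0) he
    set e' := Finsupp.equivMapDomain σ e with he'def
    have hval : e' ⟨i, c0⟩ = e ⟨i, b⟩ := by
      rw [he'def, Finsupp.equivMapDomain_apply, hσ, colorSwap_symm_apply]
    have hsl := hslope (fun j => if j = i then 1 else 0)
      (fun j => by
                   by_cases hj : j = i
                   · rw [if_pos hj]; subst hj; omega
                   · rw [if_neg hj]; exact Nat.zero_le _) e' he'
    rw [xiWeight_single i c0 rfl e', hval] at hsl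
    linarith
  · set c1 : Fin (k i) := ⟨k i - 1, by omega⟩ with hc1
    set σ := colorSwap i b c1 with hσ
    have he' := support_perm_mem hsym σ (colorSwap_fst i b c1) he
    set e' := Finsupp.equivMapDomain σ e with he'def
    have hval : e' ⟨i, c1⟩ = e ⟨i, b⟩ := by
      rw [he'def, Finsupp.equivMapDomain_apply, hσ, colorSwap_symm_apply]
    have hsl := hslope (fun j => if j = i then k i - 1 else k j)
      (fun j => by
                   by_cases hj : j = i
                   · rw [if_pos hj]; subst hj; omega
                   · rw [if_neg hj]) e' he'
    rw [xiWeight_allButLast i c1 rfl e', hhom e' he', hval] at hsl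
    push_cast at hsl ⊢
    linarith

def suppSubmodule (S : Finset ((Vars I k) →₀ ℤ)) : Submodule Fq (LaurentPoly I k) where
  carrier := {r | ∀ e ∈ r.coeff.support, e ∈ S}
  add_mem' := by
    intro a b ha hb e he
    rcases Finset.mem_union.mp (Finsupp.support_add he) with h | h
    · exact ha e h
    · exact hb e h
  zero_mem' := by intro e he; simp at he
  smul_mem' := by
    intro c r hr e he
    exact hr e (Finsupp.support_smul he)

lemma fd_suppSubmodule (S : Finset ((Vars I k) →₀ ℤ)) :
    FiniteDimensional Fq (suppSubmodule (k := k) S) := by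
  classical
  let φ : suppSubmodule (k := k) S →ₗ[Fq] (↥S → Fq) := {
    toFun := fun r e => (r : LaurentPoly I k).coeff e.1
    map_add' := fun a b => rfl
    map_smul' := fun c a => rfl }
  have hinj : Function.Injective φ := by
    intro a b hab
    apply Subtype.ext
    ext e
    by_cases heS : e ∈ S
    · exact congrFun hab ⟨e, heS⟩
    · have ha : (a : LaurentPoly I k).coeff e = 0 := by
        by_contra h; exact heS (a.2 e (Finsupp.mem_support_iff.mpr h))
      have hb : (b : LaurentPoly I k).coeff e = 0 := by
        by_contra h; exact heS (b.2 e (Finsupp.mem_support_iff.mpr h))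
      rw [ha, hb]
  exact FiniteDimensional.of_injective φ hinj
/-- for `k ≠ 0` and `d ∈ ℤ`, the space
`B_{k,d} = {R ∈ S_k : R homogeneous of degree d, of slope ≤ d/|k|}` is a
finite-dimensional `ℚ(q)`-vector space. -/
theorem stmt15
    (I A : Type) [Fintype I] [Fintype A] (s t : A → I)
    (hNoLoops : ∀ a, s a ≠ t a)
    (hPosDef : ∀ v : I → ℝ, v ≠ 0 → 0 < eulerFormR s t v v + eulerFormR s t v v)
    (k : I → ℕ) (hk : k ≠ 0) (d : ℤ) :
    FiniteDimensional Fq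
      (Submodule.span Fq {r : LaurentPoly I k |
        ColorSym r ∧ WheelCond s t r ∧ IsHomogOfDeg s t d r ∧
        SlopeLE s t ((d : ℚ) / ((∑ i, k i : ℕ) : ℚ)) r}) := by
  classical
  set μ : ℚ := (d : ℚ) / ((∑ i, k i : ℕ) : ℚ) with hμ
  set hiB : I → ℤ := fun i => ⌊μ * (∑ j, (((if j = i then 1 else 0 : ℕ)) : ℚ))
      + (denomXiDeg s t k (fun j => if j = i then 1 else 0) : ℚ)⌋ with hhiB
  set loB : I → ℤ := fun i =>
      ⌈((d + ∑ a, (k (s a) : ℤ) * (k (t a) : ℤ) : ℤ) : ℚ)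
        - (μ * (∑ j, (((if j = i then k i - 1 else k j : ℕ)) : ℚ))
          + (denomXiDeg s t k (fun j => if j = i then k i - 1 else k j) : ℚ))⌉ with hloB
  set S : Finset ((Vars I k) →₀ ℤ) := Finset.Icc
      (Finsupp.equivFunOnFinite.symm fun sv => loB sv.1)
      (Finsupp.equivFunOnFinite.symm fun sv => hiB sv.1) with hS
  have hsub : {r : LaurentPoly I k |
      ColorSym r ∧ WheelCond s t r ∧ IsHomogOfDeg s t d r ∧ SlopeLE s t μ r}
      ⊆ ↑(suppSubmodule (k := k) S) := by
    rintro r ⟨hsym, -, hhom, hslope⟩ e he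
    rw [hS, Finset.mem_Icc]
    constructor
    · rw [Finsupp.le_def]
      rintro ⟨i, b⟩
      have hb := (coord_bounds s t d μ hsym hhom hslope he i b).2
      simp only [Finsupp.coe_equivFunOnFinite_symm]
      exact Int.ceil_le.mpr hb
    · rw [Finsupp.le_def]
      rintro ⟨i, b⟩
      have hb := (coord_bounds s t d μ hsym hhom hslope he i b).1
      simp only [Finsupp.coe_equivFunOnFinite_symm]
      exact Int.le_floor.mpr hb
  haveI : FiniteDimensional Fq (suppSubmodule (k := k) S) := fd_suppSubmodule S
  exact Submodule.finiteDimensional_of_le (Submodule.span_le.mpr hsub)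

end ADEShuffle
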